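/- Let n₁, n₂ ≥ 1 and m ≥ 2. Identify each tuple v ∈ (ℤ_m)^{n₁} with the product-simplex vertex vec(v) := (e_{v(1)}, …, e_{v(n₁)}) ∈ (ℝ^m)^{n₁} ≅ ℝ^{n₁m}. Suppose A₁, …, A_{n₂} ⊆ (ℤ_m)^{n₁} are nonempty sets such that: |A_j| ≤ m for every j; each set {vec(v) : v ∈ A_j} is affinely independent; the intersection ⋂_{j=1}^{n₂} Conv({vec(v) : v ∈ A_j}) consists of exactly one point u; and for each j there is an injective map f_j : A_j → ℤ_m. For each j let (α_v)_{v ∈ A_j} be nonnegative reals summing to 1 with u = Σ_{v ∈ A_j} α_v · vec(v), and define the family of m×m matrices p_{k,j} (for 1 ≤ k ≤ n₁, 1 ≤ j ≤ n₂) by (p_{k,j})_{ab} := Σ{α_v : v ∈ A_j, v(k) = a, f_j(v) = b}. Then p = (p_{k,j}) belongs to Dist(K_{n₁,n₂}, m) and is an extreme point of it. -/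

import Mathlib

/-- The polytope `Dist(K_{n₁,n₂}, m)` of distributions on the complete
bipartite graph `K_{n₁,n₂}` with `m` outcomes: families `p k j` of `m × m`
matrices with nonnegative entries summing to `1`, whose row-sum vector depends
only on `k` and whose column-sum vector depends only on `j`. -/
def KDist (n₁ n₂ m : ℕ) : Set (Fin n₁ → Fin n₂ → Matrix (Fin m) (Fin m) ℝ) :=
  {p | (∀ k j a b, 0 ≤ p k j a b) ∧ (∀ k j, ∑ a, ∑ b, p k j a b = 1) ∧
       (∀ k j j' a, ∑ b, p k j a b = ∑ b, p k j' a b) ∧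
       (∀ k k' j b, ∑ a, p k j a b = ∑ a, p k' j a b)}

/-- The product-simplex vertex in `ℝ^{n₁ m} ≅ (ℝ^m)^{n₁}` associated to a tuple
`v ∈ (ℤ_m)^{n₁}`: its `k`-th block is the standard basis vector `e_{v k}`. -/
def vec {n₁ m : ℕ} (v : Fin n₁ → Fin m) : Fin n₁ → Fin m → ℝ :=
  fun k => Pi.single (v k) 1

open scoped Classical in
theorem stmt_19 {n₁ n₂ m : ℕ} (h₁ : 1 ≤ n₁) (h₂ : 1 ≤ n₂) (hm : 2 ≤ m)
    (A : Fin n₂ → Set (Fin n₁ → Fin m))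
    (hne : ∀ j, (A j).Nonempty)
    (hcard : ∀ j, (A j).ncard ≤ m)
    (haff : ∀ j, AffineIndependent ℝ ((↑) : (vec '' A j) → (Fin n₁ → Fin m → ℝ)))
    (u : Fin n₁ → Fin m → ℝ)
    (hu : (⋂ j, convexHull ℝ (vec '' A j)) = {u})
    (f : Fin n₂ → (Fin n₁ → Fin m) → Fin m)
    (hf : ∀ j, Set.InjOn (f j) (A j))
    (α : Fin n₂ → (Fin n₁ → Fin m) → ℝ)
    (hα0 : ∀ j, ∀ v ∈ A j, 0 ≤ α j v)
    (hα1 : ∀ j, ∑ v ∈ (A j).toFinset, α j v = 1)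
    (hαu : ∀ j, ∑ v ∈ (A j).toFinset, α j v • vec v = u)
    (p : Fin n₁ → Fin n₂ → Matrix (Fin m) (Fin m) ℝ)
    (hpdef : ∀ k j a b, p k j a b =
      ∑ v ∈ (A j).toFinset.filter (fun v => v k = a ∧ f j v = b), α j v) :
    p ∈ KDist n₁ n₂ m ∧ p ∈ Set.extremePoints ℝ (KDist n₁ n₂ m) := by
  classical
  -- injectivity of `vec`
  have hvec_inj : Function.Injective (vec (n₁ := n₁) (m := m)) := by
    intro v w h
    funext k
    have h1 := congrFun (congrFun h k) (v k)
    simp only [vec, Pi.single_apply, if_true, eq_self_iff_true] at h1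
    by_contra hne'
    rw [if_neg hne'] at h1
    exact one_ne_zero h1
  have hmemS : ∀ (j : Fin n₂) (v : Fin n₁ → Fin m), v ∈ (A j).toFinset ↔ v ∈ A j :=
    fun j v => Set.mem_toFinset
  -- structure of p: empty fibers
  have hp0 : ∀ k j a b, (∀ v ∈ A j, ¬(v k = a ∧ f j v = b)) → p k j a b = 0 := by
    intro k j a b h
    rw [hpdef, Finset.filter_false_of_mem, Finset.sum_empty]
    intro v hv
    exact h v ((hmemS j v).1 hv)
  -- singleton fibers of f j
  have hsing : ∀ (j : Fin n₂) (v : Fin n₁ → Fin m), v ∈ A j →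
      (A j).toFinset.filter (fun w => f j w = f j v) = {v} := by
    intro j v hv
    ext w
    simp only [Finset.mem_filter, Finset.mem_singleton, hmemS]
    exact ⟨fun hw => hf j hw.1 hv hw.2, fun h => by subst h; exact ⟨hv, rfl⟩⟩
  -- structure of p on columns of the form f j v
  have hpv : ∀ (k : Fin n₁) (j : Fin n₂) (a : Fin m) (v : Fin n₁ → Fin m), v ∈ A j →
      p k j a (f j v) = if v k = a then α j v else 0 := by
    intro k j a v hv
    rw [hpdef]
    by_cases hva : v k = a
    · rw [if_pos hva]
      have hfil : (A j).toFinset.filter (fun w => w k = a ∧ f j w = f j v) = {v} := by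
        ext w
        simp only [Finset.mem_filter, Finset.mem_singleton, hmemS]
        exact ⟨fun hw => hf j hw.1 hv hw.2.2, fun h => by subst h; exact ⟨hv, hva, rfl⟩⟩
      rw [hfil, Finset.sum_singleton]
    · rw [if_neg hva, Finset.filter_false_of_mem, Finset.sum_empty]
      rintro w hw ⟨hwk, hfw⟩
      exact hva ((hf j ((hmemS j w).1 hw) hv hfw) ▸ hwk)
  -- row sums of p
  have hprow : ∀ k j a, ∑ b, p k j a b =
      ∑ v ∈ (A j).toFinset.filter (fun v => v k = a), α j v := by
    intro k j a
    have h : ∀ b, p k j a b =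
        ∑ v ∈ ((A j).toFinset.filter (fun v => v k = a)).filter (fun v => f j v = b), α j v := by
      intro b; rw [hpdef, Finset.filter_filter]
    simp_rw [h]
    exact Finset.sum_fiberwise _ _ _
  -- column sums of p
  have hpcol : ∀ k j b, ∑ a, p k j a b =
      ∑ v ∈ (A j).toFinset.filter (fun v => f j v = b), α j v := by
    intro k j b
    have h : ∀ a, p k j a b =
        ∑ v ∈ ((A j).toFinset.filter (fun v => f j v = b)).filter (fun v => v k = a), α j v := by
      intro a
      rw [hpdef, Finset.filter_filter]
      apply Finset.sum_congr _ (fun _ _ => rfl)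
      apply Finset.filter_congr
      intro v _
      constructor
      · rintro ⟨h1, h2⟩; exact ⟨h2, h1⟩
      · rintro ⟨h1, h2⟩; exact ⟨h2, h1⟩
    simp_rw [h]
    exact Finset.sum_fiberwise _ _ _
  -- the row sums equal u
  have husum : ∀ j k a, ∑ v ∈ (A j).toFinset.filter (fun v => v k = a), α j v = u k a := by
    intro j k a
    have h : ∑ v ∈ (A j).toFinset, (α j v • vec v) k a = u k a := by
      rw [← hαu j]
      simp [Finset.sum_apply]
    calc ∑ v ∈ (A j).toFinset.filter (fun v => v k = a), α j v
        = ∑ v ∈ (A j).toFinset, if v k = a then α j v else 0 := Finset.sum_filter _ _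
      _ = ∑ v ∈ (A j).toFinset, (α j v • vec v) k a := by
          apply Finset.sum_congr rfl
          intro v _
          by_cases hva : v k = a
          · subst hva; simp [vec, Pi.single_apply]
          · simp [vec, Pi.single_apply, hva, if_neg (Ne.symm hva)]
      _ = u k a := h
  have hrowu : ∀ k j a, ∑ b, p k j a b = u k a := fun k j a =>
    (hprow k j a).trans (husum j k a)
  -- membership of p in KDist
  have hpos : ∀ k j a b, 0 ≤ p k j a b := by
    intro k j a b
    rw [hpdef]
    exact Finset.sum_nonneg fun v hv =>
      hα0 j v ((hmemS j v).1 (Finset.mem_filter.1 hv).1)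
  have hsum1 : ∀ k j, ∑ a, ∑ b, p k j a b = 1 := by
    intro k j
    calc ∑ a, ∑ b, p k j a b
        = ∑ a, ∑ v ∈ (A j).toFinset.filter (fun v => v k = a), α j v :=
          Finset.sum_congr rfl fun a _ => hprow k j a
      _ = ∑ v ∈ (A j).toFinset, α j v := Finset.sum_fiberwise _ _ _
      _ = 1 := hα1 j
  have hmem : p ∈ KDist n₁ n₂ m := by
    refine ⟨hpos, hsum1, ?_, ?_⟩
    · intro k j j' a
      rw [hrowu, hrowu]
    · intro k k' j b
      rw [hpcol, hpcol]
  -- KEY: any q in KDist dominated by the support of p equals p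
  have key : ∀ q, q ∈ KDist n₁ n₂ m →
      (∀ k j a b, p k j a b = 0 → q k j a b = 0) → q = p := by
    intro q hq hz
    obtain ⟨hq0, hq1, hqrow, hqcol⟩ := hq
    set k0 : Fin n₁ := ⟨0, h₁⟩ with hk0
    set j0 : Fin n₂ := ⟨0, h₂⟩ with hj0
    set c : Fin n₂ → Fin m → ℝ := fun j b => ∑ a, q k0 j a b with hcdef
    have hc : ∀ k j b, ∑ a, q k j a b = c j b := fun k j b => hqcol k k0 j b
    set w : Fin n₁ → Fin m → ℝ := fun k a => ∑ b, q k j0 a b with hwdef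
    have hw : ∀ k j a, ∑ b, q k j a b = w k a := fun k j a => hqrow k j j0 a
    have hcnn : ∀ j b, 0 ≤ c j b := fun j b =>
      Finset.sum_nonneg fun a _ => hq0 k0 j a b
    have hc0 : ∀ j b, (∀ v ∈ A j, f j v ≠ b) → c j b = 0 := by
      intro j b hb
      apply Finset.sum_eq_zero
      intro a _
      exact hz _ _ _ _ (hp0 k0 j a b (fun v hv h' => hb v hv h'.2))
    -- structure of q on columns of the form f j v
    have hqv : ∀ (j : Fin n₂) (v : Fin n₁ → Fin m), v ∈ A j → ∀ k a,
        q k j a (f j v) = if v k = a then c j (f j v) else 0 := by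
      intro j v hv k a
      by_cases hva : v k = a
      · rw [if_pos hva]
        subst hva
        have hsum : ∑ a', q k j a' (f j v) = q k j (v k) (f j v) := by
          apply Finset.sum_eq_single_of_mem _ (Finset.mem_univ _)
          intro a' _ ha'
          exact hz _ _ _ _ (by rw [hpv k j a' v hv, if_neg (fun h => ha' h.symm)])
        rw [← hc k j (f j v), hsum]
      · rw [if_neg hva]
        exact hz _ _ _ _ (by rw [hpv k j a v hv, if_neg hva])
    -- the weights c j (f j ·) sum to 1
    have hβ1 : ∀ j, ∑ v ∈ (A j).toFinset, c j (f j v) = 1 := by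
      intro j
      have h1 : ∑ b, c j b = 1 := by
        calc ∑ b, ∑ a, q k0 j a b = ∑ a, ∑ b, q k0 j a b := Finset.sum_comm
          _ = 1 := hq1 k0 j
      have h2 : ∀ b, c j b =
          ∑ v ∈ (A j).toFinset.filter (fun v => f j v = b), c j (f j v) := by
        intro b
        by_cases hb : ∃ v ∈ A j, f j v = b
        · obtain ⟨v, hv, rfl⟩ := hb
          rw [hsing j v hv, Finset.sum_singleton]
        · push_neg at hb
          rw [hc0 j b hb, Finset.filter_false_of_mem, Finset.sum_empty]
          intro v hv h'
          exact hb v ((hmemS j v).1 hv) h'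
      calc ∑ v ∈ (A j).toFinset, c j (f j v)
          = ∑ b, ∑ v ∈ (A j).toFinset.filter (fun v => f j v = b), c j (f j v) :=
            (Finset.sum_fiberwise _ _ _).symm
        _ = ∑ b, c j b := Finset.sum_congr rfl fun b _ => (h2 b).symm
        _ = 1 := h1
    -- the weighted sum of vertices equals w, for each j
    have hwsum : ∀ j, ∑ v ∈ (A j).toFinset, c j (f j v) • vec v = w := by
      intro j
      funext k a
      simp only [Finset.sum_apply]
      have hterm : ∀ v ∈ (A j).toFinset,
          (c j (f j v) • vec v) k a = if v k = a then c j (f j v) else 0 := by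
        intro v _
        by_cases hva : v k = a
        · subst hva; simp [vec, Pi.single_apply]
        · simp [vec, Pi.single_apply, hva, if_neg (Ne.symm hva)]
      rw [Finset.sum_congr rfl hterm]
      have hqb : ∀ b, q k j a b =
          ∑ v ∈ (A j).toFinset.filter (fun v => f j v = b),
            (if v k = a then c j (f j v) else 0) := by
        intro b
        by_cases hb : ∃ v ∈ A j, f j v = b
        · obtain ⟨v, hv, rfl⟩ := hb
          rw [hsing j v hv, Finset.sum_singleton, hqv j v hv k a]
        · push_neg at hb
          rw [Finset.filter_false_of_mem, Finset.sum_empty]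
          · exact hz _ _ _ _ (hp0 k j a b fun v hv h' => hb v hv h'.2)
          · intro v hv h'
            exact hb v ((hmemS j v).1 hv) h'
      calc ∑ v ∈ (A j).toFinset, (if v k = a then c j (f j v) else 0)
          = ∑ b, ∑ v ∈ (A j).toFinset.filter (fun v => f j v = b),
              (if v k = a then c j (f j v) else 0) := (Finset.sum_fiberwise _ _ _).symm
        _ = ∑ b, q k j a b := Finset.sum_congr rfl fun b _ => (hqb b).symm
        _ = w k a := hw k j a
    -- w lies in every convex hull, hence equals u
    have hwu : w = u := by
      have hWmem : w ∈ ⋂ j, convexHull ℝ (vec '' A j) := by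
        refine Set.mem_iInter.2 fun j => ?_
        rw [← hwsum j, ← Finset.centerMass_eq_of_sum_1 _ _ (hβ1 j)]
        refine Finset.centerMass_mem_convexHull _ (fun v _ => hcnn j (f j v)) ?_ ?_
        · rw [hβ1 j]; norm_num
        · intro v hv
          exact ⟨v, (hmemS j v).1 hv, rfl⟩
      rw [hu] at hWmem
      exact hWmem
    -- coefficient uniqueness
    have hcoef : ∀ j v, v ∈ A j → c j (f j v) = α j v := by
      intro j
      have hinj : Function.Injective
          (fun v : (A j) => (⟨vec ↑v, ⟨↑v, v.2, rfl⟩⟩ : (vec '' A j))) := by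
        intro v v' h
        exact Subtype.ext (hvec_inj (congrArg Subtype.val h))
      have hAI : AffineIndependent ℝ (fun v : (A j) => vec (↑v : Fin n₁ → Fin m)) :=
        (haff j).comp_embedding ⟨_, hinj⟩
      have hsub : ∀ {M : Type} [AddCommMonoid M] (g : (Fin n₁ → Fin m) → M),
          ∑ v ∈ (A j).toFinset, g v = ∑ v : (A j), g ↑v := by
        intro M _ g
        exact Finset.sum_subtype _ (fun x => Set.mem_toFinset) g
      have h1 : ∑ v : (A j), α j ↑v = 1 := by rw [← hsub (α j)]; exact hα1 j
      have h2 : ∑ v : (A j), c j (f j ↑v) = 1 := by rw [← hsub (fun v => c j (f j v))]; exact hβ1 j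
      have hcomb :
          Finset.univ.affineCombination ℝ (fun v : (A j) => vec (↑v : Fin n₁ → Fin m))
              (fun v => α j ↑v) =
          Finset.univ.affineCombination ℝ (fun v : (A j) => vec (↑v : Fin n₁ → Fin m))
              (fun v => c j (f j ↑v)) := by
        rw [Finset.affineCombination_eq_linear_combination _ _ _ h1,
          Finset.affineCombination_eq_linear_combination _ _ _ h2]
        rw [← hsub (fun v => α j v • vec v), ← hsub (fun v => c j (f j v) • vec v)]
        rw [hαu j, hwsum j, hwu]
      have heq := (affineIndependent_iff_eq_of_fintype_affineCombination_eq ℝ _).1 hAI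
        _ _ h1 h2 hcomb
      intro v hv
      exact (congrFun heq ⟨v, hv⟩).symm
    -- conclude q = p entrywise
    funext k j
    ext a b
    by_cases hb : ∃ v ∈ A j, f j v = b
    · obtain ⟨v, hv, rfl⟩ := hb
      rw [hqv j v hv k a, hpv k j a v hv]
      by_cases hva : v k = a
      · rw [if_pos hva, if_pos hva, hcoef j v hv]
      · rw [if_neg hva, if_neg hva]
    · push_neg at hb
      have hpz := hp0 k j a b fun v hv h' => hb v hv h'.2
      rw [hpz, hz k j a b hpz]
  refine ⟨hmem, hmem, ?_⟩
  intro x₁ hx₁ x₂ hx₂ hseg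
  obtain ⟨t, s, ht, hs, hts, heq⟩ := hseg
  have hzc : ∀ k j a b, p k j a b = 0 →
      x₁ k j a b = 0 ∧ x₂ k j a b = 0 := by
    intro k j a b hpz
    have he : t * x₁ k j a b + s * x₂ k j a b = 0 := by
      have h := congrFun (congrFun (congrFun (congrFun heq k) j) a) b
      simp only [Pi.add_apply, Pi.smul_apply, Matrix.add_apply, Matrix.smul_apply, smul_eq_mul] at h
      rw [h, hpz]
    have h1 : 0 ≤ t * x₁ k j a b := mul_nonneg ht.le (hx₁.1 k j a b)
    have h2 : 0 ≤ s * x₂ k j a b := mul_nonneg hs.le (hx₂.1 k j a b)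
    have ht1 : t * x₁ k j a b = 0 := by linarith
    have ht2 : s * x₂ k j a b = 0 := by linarith
    exact ⟨(mul_eq_zero.1 ht1).resolve_left (ne_of_gt ht),
      (mul_eq_zero.1 ht2).resolve_left (ne_of_gt hs)⟩
  exact key x₁ hx₁ (fun k j a b hpz => (hzc k j a b hpz).1)
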